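/- There exists a constant C > 0 such that for every g ∈ C²([0,1], ℝ), one has ∫₀¹ |g(r)|² r dr ≤ C (∫₀¹ (1 − r²)|g(r)|² r dr)^{2/3} (∫₀¹ |(d/dr)(r g(r))|² (1/r) dr)^{1/3} + C ∫₀¹ (1 − r²)|g(r)|² r dr (quantities on the right may be +∞). -/

import Mathlib

open MeasureTheory Set

set_option maxHeartbeats 1000000

lemma contIntOn (f : ℝ → ℝ) (hf : Continuous f) (a b : ℝ) :
    IntegrableOn f (Ioo a b) := (hf.integrableOn_Icc).mono_set Ioo_subset_Icc_self

lemma contIntOnIco (f : ℝ → ℝ) (hf : Continuous f) (a b : ℝ) :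
    IntegrableOn f (Ico a b) := (hf.integrableOn_Icc).mono_set Ico_subset_Icc_self

lemma disjIooIco (a b c : ℝ) : Disjoint (Ioo a b) (Ico b c) := by
  rw [Set.disjoint_left]
  rintro x ⟨_, h2⟩ ⟨h3, _⟩; linarith

lemma key (g : ℝ → ℝ) (hg : ContDiff ℝ 2 g) (δ : ℝ) (hδ0 : 0 < δ) (hδ : δ ≤ 1/4) :
    (∫ r in Ioo (0:ℝ) 1, g r ^ 2 * r) ≤
      7 * (∫ r in Ioo (0:ℝ) 1, (1 - r ^ 2) * g r ^ 2 * r) / δ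
      + 8 * δ ^ 2 * ∫ t in Ioo (1 - 2*δ) 1, (deriv (fun s => s * g s) t) ^ 2 := by
  set u : ℝ → ℝ := fun s => s * g s with hu_def
  have hgc : Continuous g := hg.continuous
  have huc : ContDiff ℝ 2 u := contDiff_id.mul hg
  have hud : Differentiable ℝ u := huc.differentiable (by norm_num)
  have huca : Continuous u := huc.continuous
  have hu'c : Continuous (deriv u) := huc.continuous_deriv (by norm_num)
  have hc1 : Continuous (fun r : ℝ => g r ^ 2 * r) := by fun_prop
  have hc2 : Continuous (fun r : ℝ => (1 - r ^ 2) * g r ^ 2 * r) := by fun_prop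
  have hc3 : Continuous (fun r : ℝ => u r ^ 2) := by fun_prop
  have hc4 : Continuous (fun r : ℝ => (deriv u r) ^ 2) := hu'c.pow 2
  set a := ∫ r in Ioo (0:ℝ) 1, (1 - r ^ 2) * g r ^ 2 * r with ha_def
  set I0 := ∫ r in Ioo (1-2*δ) (1-δ), u r ^ 2 with hI0_def
  set I1 := ∫ r in Ioo (1-δ) 1, u r ^ 2 with hI1_def
  set I01 := ∫ r in Ioo (1-2*δ) 1, u r ^ 2 with hI01_def
  set J := ∫ t in Ioo (1-2*δ) 1, (deriv u t) ^ 2 with hJ_def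
  have ha0 : 0 ≤ a := by
    apply setIntegral_nonneg measurableSet_Ioo
    rintro x ⟨h1, h2⟩
    have hx2 : (0:ℝ) ≤ 1 - x^2 := by nlinarith
    exact mul_nonneg (mul_nonneg hx2 (sq_nonneg _)) h1.le
  have hJ0 : 0 ≤ J := by
    apply setIntegral_nonneg measurableSet_Ioo
    intro x _; positivity
  -- a restricted to a subinterval of (0,1) dominates
  have hasub : ∀ c d : ℝ, 0 ≤ c → d ≤ 1 →
      (∫ r in Ioo c d, (1 - r ^ 2) * g r ^ 2 * r) ≤ a := by
    intro c d hc hd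
    apply setIntegral_mono_set (contIntOn _ hc2 _ _)
    · filter_upwards [ae_restrict_of_forall_mem measurableSet_Ioo
        (fun x (hx : x ∈ Ioo (0:ℝ) 1) => hx)] with x hx
      simp only [Pi.zero_apply]
      have hx2 : (0:ℝ) ≤ 1 - x^2 := by nlinarith [hx.1, hx.2]
      exact mul_nonneg (mul_nonneg hx2 (sq_nonneg _)) hx.1.le
    · exact HasSubset.Subset.eventuallyLE
        (fun x hx => ⟨lt_of_le_of_lt hc hx.1, lt_of_lt_of_le hx.2 hd⟩)
  -- Split L
  have hsplit : (∫ r in Ioo (0:ℝ) 1, g r ^ 2 * r)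
      = (∫ r in Ioo (0:ℝ) (1-δ), g r ^ 2 * r) + ∫ r in Ioo (1-δ) 1, g r ^ 2 * r := by
    rw [← Ioo_union_Ico_eq_Ioo (by linarith : (0:ℝ) < 1-δ) (by linarith : (1:ℝ)-δ ≤ 1),
      setIntegral_union (disjIooIco _ _ _) measurableSet_Ico
        (contIntOn _ hc1 _ _) (contIntOnIco _ hc1 _ _),
      setIntegral_congr_set (Ioo_ae_eq_Ico (a := 1-δ) (b := (1:ℝ))).symm]
  have hc5 : Continuous (fun t : ℝ => u t ^ 2 / (2*δ) + 2*δ*(deriv u t)^2) := by fun_prop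
  have hc6 : Continuous (fun t : ℝ => 2 * u t * deriv u t) := by fun_prop
  -- Step B : low piece
  have hB : (∫ r in Ioo (0:ℝ) (1-δ), g r ^ 2 * r)
      ≤ (1/δ) * ∫ r in Ioo (0:ℝ) (1-δ), (1 - r ^ 2) * g r ^ 2 * r := by
    rw [← integral_const_mul]
    apply setIntegral_mono_on (contIntOn _ hc1 _ _)
      ((contIntOn _ hc2 _ _).const_mul _) measurableSet_Ioo
    rintro x ⟨h1, h2⟩
    have h3 : δ ≤ 1 - x^2 := by nlinarith
    rw [div_mul_eq_mul_div, le_div_iff₀ hδ0]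
    nlinarith [sq_nonneg (g x), mul_nonneg (mul_nonneg (sq_nonneg (g x)) h1.le) h1.le,
      mul_nonneg (mul_nonneg (sq_nonneg (g x)) h1.le) (by linarith : (0:ℝ) ≤ 1 - x^2 - δ)]
  -- Step C : high piece vs I1
  have hC : (∫ r in Ioo (1-δ) 1, g r ^ 2 * r) ≤ 2 * I1 := by
    rw [hI1_def, ← integral_const_mul]
    apply setIntegral_mono_on (contIntOn _ hc1 _ _)
      ((contIntOn _ hc3 _ _).const_mul _) measurableSet_Ioo
    rintro x ⟨h1, h2⟩
    have hx : (3:ℝ)/4 ≤ x := by linarith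
    rw [hu_def]
    simp only
    nlinarith [sq_nonneg (g x), mul_nonneg (sq_nonneg (g x)) (by linarith : (0:ℝ) ≤ x)]
  -- I01 = I0 + I1
  have hI01dec : I01 = I0 + I1 := by
    rw [hI01_def, hI0_def, hI1_def,
      ← Ioo_union_Ico_eq_Ioo (by linarith : 1-2*δ < 1-δ) (by linarith : (1:ℝ)-δ ≤ 1),
      setIntegral_union (disjIooIco _ _ _) measurableSet_Ico
        (contIntOn _ hc3 _ _) (contIntOnIco _ hc3 _ _),
      setIntegral_congr_set (Ioo_ae_eq_Ico (a := 1-δ) (b := (1:ℝ))).symm]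
  -- Step D : minimum point
  obtain ⟨s, hsmem, hsmin⟩ := (isCompact_Icc (a := 1-2*δ) (b := 1-δ)).exists_isMinOn
    (nonempty_Icc.mpr (by linarith)) (hc3.continuousOn)
  have hsD : u s ^ 2 * δ ≤ I0 := by
    have h := setIntegral_ge_of_const_le (μ := volume) (c := u s ^ 2)
      measurableSet_Ioo (by simp) (fun x hx => hsmin (Ioo_subset_Icc_self hx))
      (contIntOn _ hc3 _ _)
    rw [Real.volume_real_Ioo, show 1-δ-(1-2*δ) = δ by ring, max_eq_left hδ0.le, smul_eq_mul, mul_comm] at h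
    exact h
  have hE : I0 ≤ (1/δ) * ∫ r in Ioo (1-2*δ) (1-δ), (1 - r ^ 2) * g r ^ 2 * r := by
    rw [hI0_def, ← integral_const_mul]
    apply setIntegral_mono_on (contIntOn _ hc3 _ _)
      ((contIntOn _ (by fun_prop) _ _).const_mul _) measurableSet_Ioo
    rintro x ⟨h1, h2⟩
    have h3 : δ ≤ 1 - x^2 := by nlinarith
    have h4 : (0:ℝ) < x := by linarith
    rw [hu_def]; simp only
    rw [div_mul_eq_mul_div, le_div_iff₀ hδ0]
    have e1 : 0 ≤ (1 - x^2 - δ) * (x * g x ^2) :=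
      mul_nonneg (by linarith) (mul_nonneg h4.le (sq_nonneg _))
    have e2 : 0 ≤ δ * ((x - x^2) * g x ^2) :=
      mul_nonneg hδ0.le (mul_nonneg (by nlinarith) (sq_nonneg _))
    nlinarith [e1, e2]
  -- Step F : pointwise bound on (1-δ, 1)
  have hF : ∀ r ∈ Ioo (1-δ) (1:ℝ), u r ^ 2 ≤ u s ^ 2 + (I01 / (2*δ) + 2*δ*J) := by
    rintro r ⟨hr1, hr2⟩
    have hsr : s ≤ r := le_trans hsmem.2 hr1.le
    have hftc : ∫ t in s..r, (2 * u t * deriv u t) = u r ^ 2 - u s ^ 2 := by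
      apply intervalIntegral.integral_eq_sub_of_hasDerivAt
      · intro x _
        have h := ((hud x).hasDerivAt).fun_pow 2
        simpa [mul_comm, mul_assoc, mul_left_comm] using h
      · exact hc6.intervalIntegrable _ _
    have hmono : ∫ t in s..r, (2 * u t * deriv u t)
        ≤ ∫ t in s..r, (u t ^ 2 / (2*δ) + 2*δ*(deriv u t)^2) := by
      apply intervalIntegral.integral_mono_on hsr (hc6.intervalIntegrable _ _)
        (hc5.intervalIntegrable _ _)
      intro x _
      have h2δ : (0:ℝ) < 2*δ := by linarith
      have key : 0 ≤ (u x - 2*δ*deriv u x)^2 := sq_nonneg _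
      rw [← sub_nonneg]
      have expand : u x ^ 2 / (2*δ) + 2*δ*(deriv u x)^2 - 2 * u x * deriv u x
          = (u x - 2*δ*deriv u x)^2 / (2*δ) := by
        field_simp; ring
      rw [expand]; positivity
    have hset : ∫ t in s..r, (u t ^ 2 / (2*δ) + 2*δ*(deriv u t)^2)
        ≤ I01 / (2*δ) + 2*δ*J := by
      rw [intervalIntegral.integral_of_le hsr]
      have hsub : Ioc s r ⊆ Ioo (1-2*δ) 1 :=
        fun x hx => ⟨lt_of_le_of_lt hsmem.1 hx.1, lt_of_le_of_lt hx.2 hr2⟩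
      calc ∫ t in Ioc s r, (u t ^ 2 / (2*δ) + 2*δ*(deriv u t)^2)
          ≤ ∫ t in Ioo (1-2*δ) 1, (u t ^ 2 / (2*δ) + 2*δ*(deriv u t)^2) := by
            apply setIntegral_mono_set (contIntOn _ hc5 _ _)
            · filter_upwards with x
              simp only [Pi.zero_apply]
              positivity
            · exact HasSubset.Subset.eventuallyLE hsub
        _ = I01 / (2*δ) + 2*δ*J := by
            rw [integral_add ((contIntOn _ (by fun_prop) _ _))
              ((contIntOn _ (by fun_prop) _ _)), integral_div, integral_const_mul]
    nlinarith [hftc, hmono, hset]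
  -- Step G : I1 ≤ δ * (bound)
  have hG : I1 ≤ δ * (u s ^ 2 + (I01 / (2*δ) + 2*δ*J)) := by
    rw [hI1_def]
    calc (∫ r in Ioo (1-δ) 1, u r ^ 2)
        ≤ ∫ _r in Ioo (1-δ) (1:ℝ), (u s ^ 2 + (I01 / (2*δ) + 2*δ*J)) := by
          apply setIntegral_mono_on (contIntOn _ hc3 _ _)
            (integrableOn_const measure_Ioo_lt_top.ne) measurableSet_Ioo hF
      _ = δ * (u s ^ 2 + (I01 / (2*δ) + 2*δ*J)) := by
          rw [setIntegral_const, Real.volume_real_Ioo, show 1-(1-δ) = δ by ring,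
            max_eq_left hδ0.le, smul_eq_mul]
  -- final arithmetic
  have hE' : I0 ≤ (1/δ) * a := by
    refine le_trans hE ?_
    have := hasub (1-2*δ) (1-δ) (by linarith) (by linarith)
    have hpos : (0:ℝ) ≤ 1/δ := by positivity
    exact mul_le_mul_of_nonneg_left this hpos
  have hGexp : δ * (u s ^ 2 + (I01 / (2*δ) + 2*δ*J))
      = δ * u s ^ 2 + I01/2 + 2*δ^2*J := by
    field_simp; ring
  have hdiv : (1/δ) * a = a / δ := by ring
  have hB' : (∫ r in Ioo (0:ℝ) (1-δ), g r ^ 2 * r) ≤ (1/δ) * a := by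
    refine le_trans hB ?_
    have := hasub 0 (1-δ) le_rfl (by linarith)
    have hpos : (0:ℝ) ≤ 1/δ := by positivity
    exact mul_le_mul_of_nonneg_left this hpos
  have hI1fin : I1 ≤ 3 * I0 + 4*δ^2*J := by
    rw [hGexp] at hG
    nlinarith [hsD, hG, hI01dec]
  rw [hsplit]
  have h7 : 7 * a / δ = 7 * ((1/δ) * a) := by ring
  rw [h7]
  linarith [hB', hC, hI1fin, hE']

/-- There is `C > 0` such that for every `g ∈ C²([0,1])`,
`∫₀¹ |g|² r dr ≤ C (∫₀¹ (1−r²)|g|² r dr)^{2/3} (∫₀¹ |(d/dr)(rg)|² (1/r) dr)^{1/3}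
  + C ∫₀¹ (1−r²)|g|² r dr` (quantities on the right may be `+∞`). -/
theorem stmt4 :
    ∃ C : ℝ, 0 < C ∧ ∀ g : ℝ → ℝ, ContDiff ℝ 2 g →
      (∫⁻ r in Ioo (0:ℝ) 1, ENNReal.ofReal (|g r| ^ 2 * r))
        ≤ ENNReal.ofReal C
            * (∫⁻ r in Ioo (0:ℝ) 1,
                ENNReal.ofReal ((1 - r ^ 2) * |g r| ^ 2 * r)) ^ ((2:ℝ)/3)
            * (∫⁻ r in Ioo (0:ℝ) 1,
                ENNReal.ofReal (|deriv (fun s => s * g s) r| ^ 2 / r)) ^ ((1:ℝ)/3)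
          + ENNReal.ofReal C
            * ∫⁻ r in Ioo (0:ℝ) 1,
                ENNReal.ofReal ((1 - r ^ 2) * |g r| ^ 2 * r) := by
  refine ⟨60, by norm_num, ?_⟩
  intro g hg
  have hgc : Continuous g := hg.continuous
  simp only [sq_abs]
  set u : ℝ → ℝ := fun s => s * g s with hu_def
  have huc : ContDiff ℝ 2 u := by rw [hu_def]; exact contDiff_id.mul hg
  have hu'c : Continuous (deriv u) := huc.continuous_deriv (by norm_num)
  have hc1 : Continuous (fun r : ℝ => g r ^ 2 * r) := by fun_prop
  have hc2 : Continuous (fun r : ℝ => (1 - r ^ 2) * g r ^ 2 * r) := by fun_prop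
  have hc4 : Continuous (fun r : ℝ => (deriv u r) ^ 2) := hu'c.pow 2
  set A := ∫⁻ r in Ioo (0:ℝ) 1, ENNReal.ofReal ((1 - r ^ 2) * g r ^ 2 * r) with hA_def
  set B := ∫⁻ r in Ioo (0:ℝ) 1, ENNReal.ofReal ((deriv u r) ^ 2 / r) with hB_def
  set a := ∫ r in Ioo (0:ℝ) 1, (1 - r ^ 2) * g r ^ 2 * r with ha_def
  have haR : 0 ≤ a := by
    apply setIntegral_nonneg measurableSet_Ioo
    rintro x ⟨h1, h2⟩
    have hx2 : (0:ℝ) ≤ 1 - x^2 := by nlinarith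
    exact mul_nonneg (mul_nonneg hx2 (sq_nonneg _)) h1.le
  have hL : (∫⁻ r in Ioo (0:ℝ) 1, ENNReal.ofReal (g r ^ 2 * r))
      = ENNReal.ofReal (∫ r in Ioo (0:ℝ) 1, g r ^ 2 * r) := by
    rw [ofReal_integral_eq_lintegral_ofReal (contIntOn _ hc1 _ _)
      (ae_restrict_of_forall_mem measurableSet_Ioo
        (fun x hx => mul_nonneg (sq_nonneg _) hx.1.le))]
  have hA' : A = ENNReal.ofReal a := by
    rw [hA_def, ha_def, ofReal_integral_eq_lintegral_ofReal (contIntOn _ hc2 _ _)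
      (ae_restrict_of_forall_mem measurableSet_Ioo
        (fun x hx => mul_nonneg (mul_nonneg (by nlinarith [hx.1, hx.2]) (sq_nonneg _)) hx.1.le))]
  by_cases hA0 : A = 0
  · -- then g ≡ 0 a.e. on (0,1)
    have hmeas : Measurable (fun r : ℝ => ENNReal.ofReal ((1 - r ^ 2) * g r ^ 2 * r)) :=
      (ENNReal.continuous_ofReal.comp hc2).measurable
    have h0 := (lintegral_eq_zero_iff' hmeas.aemeasurable).mp hA0
    have hzero : (∫⁻ r in Ioo (0:ℝ) 1, ENNReal.ofReal (g r ^ 2 * r)) = 0 := by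
      rw [← lintegral_zero]
      apply lintegral_congr_ae
      filter_upwards [h0, ae_restrict_of_forall_mem measurableSet_Ioo
        (fun x (hx : x ∈ Ioo (0:ℝ) 1) => hx)] with x hx0 hxm
      simp only [Pi.zero_apply] at hx0 ⊢
      rw [ENNReal.ofReal_eq_zero] at hx0 ⊢
      have h1 : (0:ℝ) < 1 - x^2 := by nlinarith [hxm.1, hxm.2]
      have h2 : g x ^ 2 ≤ 0 := by
        by_contra hcon
        push_neg at hcon
        nlinarith [mul_pos (mul_pos h1 hcon) hxm.1]
      nlinarith [sq_nonneg (g x), hxm.1]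
    rw [hzero]
    exact zero_le
  · have ha : 0 < a := by
      by_contra h
      push_neg at h
      exact hA0 (by rw [hA']; simpa [ENNReal.ofReal_eq_zero] using h)
    have hJB : ∀ δ : ℝ, 0 < δ → δ ≤ 1/4 →
        ENNReal.ofReal (∫ t in Ioo (1-2*δ) 1, (deriv u t) ^ 2) ≤ B := by
      intro δ h1 h2
      rw [ofReal_integral_eq_lintegral_ofReal (contIntOn _ hc4 _ _)
        (ae_restrict_of_forall_mem measurableSet_Ioo (fun x _ => sq_nonneg _))]
      calc (∫⁻ t in Ioo (1-2*δ) 1, ENNReal.ofReal ((deriv u t) ^ 2))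
          ≤ ∫⁻ t in Ioo (1-2*δ) 1, ENNReal.ofReal ((deriv u t) ^ 2 / t) := by
            apply lintegral_mono_ae
            filter_upwards [ae_restrict_of_forall_mem measurableSet_Ioo
              (fun x (hx : x ∈ Ioo (1-2*δ) (1:ℝ)) => hx)] with x hx
            apply ENNReal.ofReal_le_ofReal
            have hx0 : (0:ℝ) < x := by linarith [hx.1]
            rw [le_div_iff₀ hx0]
            nlinarith [sq_nonneg (deriv u x), hx.2]
        _ ≤ B := by
            rw [hB_def]
            exact lintegral_mono_set (fun x hx => ⟨by linarith [hx.1], hx.2⟩)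
    by_cases hBtop : B = ⊤
    · have h1 : (ENNReal.ofReal 60) * A ^ ((2:ℝ)/3) * B ^ ((1:ℝ)/3) = ⊤ := by
        rw [hBtop, ENNReal.top_rpow_of_pos (by norm_num), ENNReal.mul_top]
        apply mul_ne_zero
        · simp
        · intro h
          rw [ENNReal.rpow_eq_zero_iff] at h
          rcases h with ⟨h, _⟩ | ⟨_, h⟩
          · exact hA0 h
          · norm_num at h
      rw [h1]
      simp
    · set b := B.toReal with hb_def
      have hb0 : 0 ≤ b := ENNReal.toReal_nonneg
      have hJb : ∀ δ : ℝ, 0 < δ → δ ≤ 1/4 →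
          (∫ t in Ioo (1-2*δ) 1, (deriv u t) ^ 2) ≤ b := fun δ h1 h2 =>
        (ENNReal.ofReal_le_iff_le_toReal hBtop).mp (hJB δ h1 h2)
      have hkey := key g hg
      rw [show (fun s => s * g s) = u from rfl] at hkey
      by_cases hba : b ≤ 64 * a
      · -- δ = 1/4
        have hk := hkey (1/4) (by norm_num) le_rfl
        have hJ' := hJb (1/4) (by norm_num) le_rfl
        have hJ0 : 0 ≤ ∫ t in Ioo (1-2*(1/4:ℝ)) 1, (deriv u t) ^ 2 :=
          setIntegral_nonneg measurableSet_Ioo (fun x _ => sq_nonneg _)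
        have hLr : (∫ r in Ioo (0:ℝ) 1, g r ^ 2 * r) ≤ 60 * a := by
          rw [← ha_def] at hk
          norm_num at hk
          linarith
        rw [hL]
        refine le_trans ?_ (self_le_add_left _ _)
        rw [hA', ← ENNReal.ofReal_mul (by norm_num)]
        exact ENNReal.ofReal_le_ofReal hLr
      · push_neg at hba
        have hb : 0 < b := lt_of_le_of_lt (by positivity) hba
        set δ := (a/b) ^ ((1:ℝ)/3) with hδdef
        have hab : 0 < a / b := div_pos ha hb
        have hδ0 : 0 < δ := Real.rpow_pos_of_pos hab _
        have hδlt : δ ≤ 1/4 := by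
          have h1 : a / b < 1/64 := by
            rw [div_lt_div_iff₀ hb (by norm_num)]
            linarith
          have h2 : ((1:ℝ)/64) ^ ((1:ℝ)/3) = 1/4 := by
            rw [show (1:ℝ)/64 = (1/4 : ℝ)^(3:ℕ) by norm_num,
              ← Real.rpow_natCast ((1:ℝ)/4) 3, ← Real.rpow_mul (by norm_num)]
            norm_num
          calc δ ≤ ((1:ℝ)/64) ^ ((1:ℝ)/3) :=
                Real.rpow_le_rpow hab.le h1.le (by norm_num)
            _ = 1/4 := h2
        set p := a ^ ((1:ℝ)/3) with hpdef
        set q := b ^ ((1:ℝ)/3) with hqdef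
        have hp : 0 < p := Real.rpow_pos_of_pos ha _
        have hq : 0 < q := Real.rpow_pos_of_pos hb _
        have hp3 : p ^ (3:ℕ) = a := by
          rw [hpdef, ← Real.rpow_natCast (a ^ ((1:ℝ)/3)) 3, ← Real.rpow_mul haR]
          norm_num
        have hq3 : q ^ (3:ℕ) = b := by
          rw [hqdef, ← Real.rpow_natCast (b ^ ((1:ℝ)/3)) 3, ← Real.rpow_mul hb0]
          norm_num
        have hδpq : δ = p / q := by
          rw [hδdef, hpdef, hqdef, Real.div_rpow haR hb0]
        have hk := hkey δ hδ0 hδlt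
        have hJ' := hJb δ hδ0 hδlt
        have hJ0 : 0 ≤ ∫ t in Ioo (1-2*δ) 1, (deriv u t) ^ 2 :=
          setIntegral_nonneg measurableSet_Ioo (fun x _ => sq_nonneg _)
        have harith : 7*a/δ + 8*δ^2*b = 15 * (p^2*q) := by
          rw [hδpq, ← hp3, ← hq3]
          field_simp
          ring
        have hLr : (∫ r in Ioo (0:ℝ) 1, g r ^ 2 * r) ≤ 15 * (p^2*q) := by
          rw [← ha_def] at hk
          have h8 : 8*δ^2*(∫ t in Ioo (1-2*δ) 1, (deriv u t) ^ 2) ≤ 8*δ^2*b :=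
            mul_le_mul_of_nonneg_left hJ' (by positivity)
          linarith
        have hApow : A ^ ((2:ℝ)/3) = ENNReal.ofReal (p^2) := by
          rw [hA', ENNReal.ofReal_rpow_of_nonneg haR (by norm_num)]
          congr 1
          rw [show (2:ℝ)/3 = (1/3)*2 by norm_num, Real.rpow_mul haR, ← hpdef,
            ← Real.rpow_natCast p 2]
          norm_num
        have hBpow : B ^ ((1:ℝ)/3) = ENNReal.ofReal q := by
          conv_lhs => rw [← ENNReal.ofReal_toReal hBtop, ← hb_def]
          rw [ENNReal.ofReal_rpow_of_nonneg hb0 (by norm_num), ← hqdef]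
        rw [hL]
        refine le_trans ?_ le_self_add
        rw [hApow, hBpow, ← ENNReal.ofReal_mul (by norm_num),
          ← ENNReal.ofReal_mul (by positivity)]
        apply ENNReal.ofReal_le_ofReal
        nlinarith [hLr, mul_nonneg (sq_nonneg p) hq.le]
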